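/- Let t ≥ 2, n ≥ 1, and 0 ≤ m ≤ n - 1. Then over all graphs G on n vertices with m edges, the quantity ∑_v C(d_v, t) is maximised by the star K_{1,m} (m edges at a common vertex), which attains value C(m, t), and moreover every t-edge subgraph of the star is intersecting. -/

import Mathlib

/-- The star `K_{1,m}` on vertex set `Fin n`: vertex `0` joined to vertices `1, …, m`. -/
def starGraph (n m : ℕ) : SimpleGraph (Fin n) where
  Adj a b := a ≠ b ∧ (((a : ℕ) = 0 ∧ (b : ℕ) ≤ m) ∨ ((b : ℕ) = 0 ∧ (a : ℕ) ≤ m))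
  symm := ⟨fun a b h => ⟨h.1.symm, h.2.symm⟩⟩
  loopless := ⟨fun a h => h.1 rfl⟩

/-- Counting `t`-stars: `∑_v C(d_v,t)` is at most the number of `t`-subsets of the edge set. -/
lemma sum_choose_le_aux {V : Type*} [Fintype V] [DecidableEq V] (t : ℕ) (ht : 2 ≤ t)
    (G : SimpleGraph V) [DecidableRel G.Adj] :
    ∑ v : V, (G.degree v).choose t ≤ G.edgeFinset.card.choose t := by
  classical
  set P : V → Finset (Finset (Sym2 V)) :=
    fun v => Finset.powersetCard t (G.incidenceFinset v) with hP
  have hmemP : ∀ v (S : Finset (Sym2 V)), S ∈ P v ↔ S ⊆ G.incidenceFinset v ∧ S.card = t := by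
    intro v S; simp [hP, Finset.mem_powersetCard]
  have hdisj : ∀ v ∈ Finset.univ, ∀ w ∈ Finset.univ, v ≠ w → Disjoint (P v) (P w) := by
    intro v _ w _ hvw
    rw [Finset.disjoint_left]
    intro S hSv hSw
    obtain ⟨hv, hcard⟩ := (hmemP v S).mp hSv
    obtain ⟨hw, _⟩ := (hmemP w S).mp hSw
    have h1 : 1 < S.card := by omega
    obtain ⟨e, he, f, hf, hef⟩ := Finset.one_lt_card.mp h1
    have hev := (G.mem_incidenceFinset v e).mp (hv he)
    have hew := (G.mem_incidenceFinset w e).mp (hw he)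
    have hfv := (G.mem_incidenceFinset v f).mp (hv hf)
    have hfw := (G.mem_incidenceFinset w f).mp (hw hf)
    have h1 : e = s(v, w) := (Sym2.mem_and_mem_iff hvw).mp ⟨hev.2, hew.2⟩
    have h2 : f = s(v, w) := (Sym2.mem_and_mem_iff hvw).mp ⟨hfv.2, hfw.2⟩
    exact hef (h1.trans h2.symm)
  have hsum : ∑ v : V, (P v).card = (Finset.univ.biUnion P).card :=
    (Finset.card_biUnion hdisj).symm
  have hcardP : ∀ v, (P v).card = (G.degree v).choose t := by
    intro v
    rw [hP, Finset.card_powersetCard, SimpleGraph.card_incidenceFinset_eq_degree]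
  calc ∑ v : V, (G.degree v).choose t = ∑ v : V, (P v).card := by
        simp_rw [hcardP]
    _ = (Finset.univ.biUnion P).card := hsum
    _ ≤ (Finset.powersetCard t G.edgeFinset).card := by
        apply Finset.card_le_card
        intro S hS
        obtain ⟨v, -, hSv⟩ := Finset.mem_biUnion.mp hS
        obtain ⟨hv, hcard⟩ := (hmemP v S).mp hSv
        rw [Finset.mem_powersetCard]
        refine ⟨fun e he => ?_, hcard⟩
        exact SimpleGraph.mem_edgeFinset.mpr ((G.mem_incidenceFinset v e).mp (hv he)).1
    _ = G.edgeFinset.card.choose t := Finset.card_powersetCard _ _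

open scoped Classical in
/-- For `t ≥ 2` and `m ≤ n - 1`, over graphs on `n` vertices with `m` edges the quantity
`∑_v C(d_v, t)` is maximised by the star `K_{1,m}`, which attains `C(m,t)`; moreover every
`t`-edge subgraph of the star is intersecting. -/
theorem star_maximises (n m t : ℕ) (ht : 2 ≤ t) (hn : 1 ≤ n) (hm : m ≤ n - 1) :
    (∀ G : SimpleGraph (Fin n), G.edgeFinset.card = m →
        ∑ v : Fin n, (G.degree v).choose t ≤ m.choose t) ∧
      (starGraph n m).edgeFinset.card = m ∧
      (∑ v : Fin n, ((starGraph n m).degree v).choose t = m.choose t) ∧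
      (∀ E ⊆ (starGraph n m).edgeFinset, E.card = t →
        ∀ e ∈ E, ∀ f ∈ E, e ≠ f → ∃ v : Fin n, v ∈ e ∧ v ∈ f) := by
  haveI : NeZero n := ⟨by omega⟩
  have hmn : m < n := by omega
  have hadj : ∀ a b : Fin n, (starGraph n m).Adj a b ↔
      (a ≠ b ∧ (((a : ℕ) = 0 ∧ (b : ℕ) ≤ m) ∨ ((b : ℕ) = 0 ∧ (a : ℕ) ≤ m))) :=
    fun _ _ => Iff.rfl
  have hv0 : ∀ a : Fin n, (a : ℕ) = 0 ↔ a = 0 := by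
    intro a
    constructor
    · intro h; exact Fin.ext (by simpa using h)
    · intro h; subst h; simp
  -- the set of leaves has cardinality `m`
  have hA1 : (Finset.univ.filter (fun b : Fin n => (b : ℕ) ≠ 0 ∧ (b : ℕ) ≤ m)).card
      = (Finset.Icc 1 m).card := by
    refine Finset.card_bij (fun b _ => (b : ℕ)) ?_ ?_ ?_
    · intro b hb
      simp only [Finset.mem_filter, Finset.mem_univ, true_and] at hb
      simp only [Finset.mem_Icc]
      exact ⟨by omega, by omega⟩
    · intro a _ b _ h; exact Fin.ext h
    · intro x hx
      rw [Finset.mem_Icc] at hx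
      exact ⟨⟨x, by omega⟩, by simp; omega, rfl⟩
  have hA : (Finset.univ.filter (fun b : Fin n => (b : ℕ) ≠ 0 ∧ (b : ℕ) ≤ m)).card = m := by
    rw [hA1, Nat.card_Icc]; omega
  have hset : Finset.univ.filter ((starGraph n m).Adj 0)
      = Finset.univ.filter (fun b : Fin n => (b : ℕ) ≠ 0 ∧ (b : ℕ) ≤ m) := by
    ext b
    simp only [Finset.mem_filter, Finset.mem_univ, true_and, hadj]
    constructor
    · rintro ⟨hne, h | h⟩
      · exact ⟨fun hb => hne (((hv0 b).mp hb).symm ▸ rfl), h.2⟩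
      · exact absurd ((hv0 b).mp h.1) (fun hb => hne hb.symm)
    · rintro ⟨hb0, hbm⟩
      exact ⟨fun h => hb0 (by rw [← h]; simp), Or.inl ⟨by simp, hbm⟩⟩
  have hdeg0 : (starGraph n m).degree 0 = m := by
    rw [SimpleGraph.degree, SimpleGraph.neighborFinset_eq_filter, hset, hA]
  have hdegsmall : ∀ v : Fin n, (v : ℕ) ≠ 0 → (v : ℕ) ≤ m → (starGraph n m).degree v = 1 := by
    intro v h0 hvm
    rw [SimpleGraph.degree, SimpleGraph.neighborFinset_eq_filter]
    rw [show (1 : ℕ) = ({0} : Finset (Fin n)).card from rfl]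
    congr 1
    ext b
    simp only [Finset.mem_filter, Finset.mem_univ, true_and, hadj, Finset.mem_singleton]
    constructor
    · rintro ⟨hne, h | h⟩
      · exact absurd h.1 h0
      · exact (hv0 b).mp h.1
    · rintro rfl
      exact ⟨fun h => h0 (by rw [h]; simp), Or.inr ⟨by simp, hvm⟩⟩
  have hdegbig : ∀ v : Fin n, m < (v : ℕ) → (starGraph n m).degree v = 0 := by
    intro v hv
    rw [SimpleGraph.degree, SimpleGraph.neighborFinset_eq_filter, Finset.card_eq_zero]
    rw [Finset.filter_eq_empty_iff]
    intro b _
    rw [hadj]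
    rintro ⟨hne, ⟨h1, _⟩ | ⟨_, h2⟩⟩
    · omega
    · omega
  -- sum of degrees is 2m
  have hsumdeg : ∑ v : Fin n, (starGraph n m).degree v = 2 * m := by
    rw [← Finset.sum_erase_add _ _ (Finset.mem_univ (0 : Fin n)), hdeg0]
    have herase : ∑ v ∈ Finset.univ.erase (0 : Fin n), (starGraph n m).degree v
        = ∑ v ∈ Finset.univ.erase (0 : Fin n),
            (if (v : ℕ) ≠ 0 ∧ (v : ℕ) ≤ m then 1 else 0) := by
      apply Finset.sum_congr rfl
      intro v hv
      have h0 : (v : ℕ) ≠ 0 := fun h =>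
        (Finset.mem_erase.mp hv).1 ((hv0 v).mp h)
      by_cases hvm : (v : ℕ) ≤ m
      · rw [hdegsmall v h0 hvm, if_pos ⟨h0, hvm⟩]
      · rw [hdegbig v (by omega), if_neg (by tauto)]
    rw [herase, Finset.sum_erase _ (by simp)]
    rw [← Finset.card_filter]
    rw [hA]
    ring
  have hedges : (starGraph n m).edgeFinset.card = m := by
    have := SimpleGraph.sum_degrees_eq_twice_card_edges (starGraph n m)
    omega
  -- each edge of the star contains the centre 0
  have hzero : ∀ e ∈ (starGraph n m).edgeFinset, (0 : Fin n) ∈ e := by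
    intro e he
    rw [SimpleGraph.mem_edgeFinset] at he
    induction e with
    | _ a b =>
      rw [SimpleGraph.mem_edgeSet, hadj] at he
      rcases he.2 with ⟨h, _⟩ | ⟨h, _⟩
      · rw [(hv0 a).mp h]; exact Sym2.mem_mk_left _ _
      · rw [(hv0 b).mp h]; exact Sym2.mem_mk_right _ _
  refine ⟨?_, hedges, ?_, ?_⟩
  · intro G hG
    calc ∑ v : Fin n, (G.degree v).choose t ≤ G.edgeFinset.card.choose t :=
          sum_choose_le_aux t ht G
      _ = m.choose t := by rw [hG]
  · rw [Finset.sum_eq_single (0 : Fin n)]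
    · rw [hdeg0]
    · intro v _ hv
      have h0 : (v : ℕ) ≠ 0 := fun h => hv ((hv0 v).mp h)
      by_cases hvm : (v : ℕ) ≤ m
      · rw [hdegsmall v h0 hvm]; exact Nat.choose_eq_zero_of_lt (by omega)
      · rw [hdegbig v (by omega)]; exact Nat.choose_eq_zero_of_lt (by omega)
    · intro h; exact absurd (Finset.mem_univ _) h
  · intro E hE _ e he f hf _
    exact ⟨0, hzero e (hE he), hzero f (hE hf)⟩
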